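/- Let α ∈ (0,1) and β < 1+α. Then for every k ∈ ℕ there exists a constant C_k > 0, depending only on α, β and k, such that for all real s ∈ (0,1]: |∫₀^∞ ω^k e^{−sω} ψ_{α,β}(ω) dω| ≤ C_k s^{−max(k−β+1, 0)} if β ≠ 1, and |∫₀^∞ ω^k e^{−sω} ψ_{α,1}(ω) dω| ≤ C_k s^{−max(k−α, 0)} if β = 1; in particular the integrals converge absolutely for every s > 0. -/

import Mathlib

open MeasureTheory

/-- The function ψ_{α,β}(ω) = (ω^{2α−β} sin(πβ) − ω^{α−β} sin(π(β−α)))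
/ (ω^{2α} + 2ω^α cos(πα) + 1) for ω > 0. -/
noncomputable def psiml (α β : ℝ) (ω : ℝ) : ℝ :=
  (ω ^ (2 * α - β) * Real.sin (Real.pi * β) -
      ω ^ (α - β) * Real.sin (Real.pi * (β - α))) /
    (ω ^ (2 * α) + 2 * ω ^ α * Real.cos (Real.pi * α) + 1)

private lemma crp_contOn (r : ℝ) : ContinuousOn (fun ω : ℝ => ω ^ r) (Set.Ioi 0) :=
  fun x hx => (Real.continuousAt_rpow_const x r (Or.inl (ne_of_gt hx))).continuousWithinAt

/-- Base integrability: `ω^r * exp (-s ω)` is integrable on `(0, ∞)` for `r > -1`, `s > 0`. -/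
private lemma base_int {r s : ℝ} (hr : -1 < r) (hs : 0 < s) :
    IntegrableOn (fun ω : ℝ => ω ^ r * Real.exp (-s * ω)) (Set.Ioi 0) := by
  have := integrableOn_rpow_mul_exp_neg_mul_rpow (p := 1) hr one_pos hs
  simpa [Real.rpow_one] using this

/-- Tail integrability on `(1, ∞)` for any exponent `q`. -/
private lemma tail_int (q : ℝ) {s : ℝ} (hs : 0 < s) :
    IntegrableOn (fun ω : ℝ => ω ^ q * Real.exp (-s * ω)) (Set.Ioi 1) := by
  have h0 : IntegrableOn (fun ω : ℝ => ω ^ (max q 0) * Real.exp (-s * ω)) (Set.Ioi 1) :=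
    (base_int (lt_of_lt_of_le (by norm_num) (le_max_right q 0)) hs).mono_set
      (Set.Ioi_subset_Ioi zero_le_one)
  refine h0.integrable.mono' ?_ ?_
  · exact (((crp_contOn q).mono (Set.Ioi_subset_Ioi zero_le_one)).mul
      (Real.continuous_exp.comp (by fun_prop)).continuousOn).aestronglyMeasurable
      measurableSet_Ioi
  · filter_upwards [ae_restrict_mem measurableSet_Ioi] with ω hω
    have hω1 : (1 : ℝ) ≤ ω := le_of_lt hω
    have hω0 : 0 < ω := lt_of_lt_of_le one_pos hω1
    rw [Real.norm_eq_abs, abs_mul, abs_of_nonneg (Real.rpow_nonneg hω0.le q),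
      abs_of_pos (Real.exp_pos _)]
    have : ω ^ q ≤ ω ^ (max q 0) :=
      Real.rpow_le_rpow_of_exponent_le hω1 (le_max_left q 0)
    exact mul_le_mul_of_nonneg_right this (Real.exp_pos _).le

/-- Master estimate: if `F s` is continuous on `(0,∞)`, bounded by `c₁ ω^p` (`p > -1`) on
`(0,1]` and by `c₀ ω^q e^{-sω}` on `[1,∞)` with `q ≠ -1`, then its integral over `(0,∞)`
exists and is `O(s^{-max(q+1,0)})` for `s ∈ (0,1]`. -/
private lemma master {F : ℝ → ℝ → ℝ} {c₀ c₁ p q : ℝ} (hc₀ : 0 ≤ c₀) (hc₁ : 0 ≤ c₁)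
    (hp : -1 < p) (hq : q ≠ -1)
    (hFc : ∀ s : ℝ, 0 < s → ContinuousOn (F s) (Set.Ioi 0))
    (hsmall : ∀ s ω : ℝ, 0 < s → ω ∈ Set.Ioc (0 : ℝ) 1 → |F s ω| ≤ c₁ * ω ^ p)
    (htail : ∀ s ω : ℝ, 0 < s → 1 ≤ ω → |F s ω| ≤ c₀ * ω ^ q * Real.exp (-s * ω)) :
    ∃ C > (0 : ℝ), (∀ s : ℝ, 0 < s → IntegrableOn (F s) (Set.Ioi 0)) ∧
      ∀ s : ℝ, 0 < s → s ≤ 1 →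
        |∫ ω in Set.Ioi (0 : ℝ), F s ω| ≤ C * s ^ (-(max (q + 1) 0)) := by
  -- integrable dominators
  have hg₁ : IntegrableOn (fun ω : ℝ => c₁ * ω ^ p) (Set.Ioc 0 1) := by
    have : IntervalIntegrable (fun ω : ℝ => ω ^ p) volume 0 1 :=
      intervalIntegral.intervalIntegrable_rpow' hp
    rw [intervalIntegrable_iff_integrableOn_Ioc_of_le zero_le_one] at this
    exact this.const_mul c₁
  have hg₂ : ∀ s : ℝ, 0 < s →
      IntegrableOn (fun ω : ℝ => c₀ * ω ^ q * Real.exp (-s * ω)) (Set.Ioi 1) := by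
    intro s hs
    simpa [mul_assoc, IntegrableOn] using ((tail_int q hs).const_mul c₀)
  -- integrability of F s on the pieces
  have hI1 : ∀ s : ℝ, 0 < s → IntegrableOn (F s) (Set.Ioc 0 1) := by
    intro s hs
    refine hg₁.integrable.mono'
      (((hFc s hs).mono Set.Ioc_subset_Ioi_self).aestronglyMeasurable measurableSet_Ioc) ?_
    filter_upwards [ae_restrict_mem measurableSet_Ioc] with ω hω
    rw [Real.norm_eq_abs]; exact hsmall s ω hs hω
  have hI2 : ∀ s : ℝ, 0 < s → IntegrableOn (F s) (Set.Ioi 1) := by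
    intro s hs
    refine (hg₂ s hs).integrable.mono'
      (((hFc s hs).mono (Set.Ioi_subset_Ioi zero_le_one)).aestronglyMeasurable
        measurableSet_Ioi) ?_
    filter_upwards [ae_restrict_mem measurableSet_Ioi] with ω hω
    rw [Real.norm_eq_abs]; exact htail s ω hs (le_of_lt hω)
  have hI : ∀ s : ℝ, 0 < s → IntegrableOn (F s) (Set.Ioi 0) := by
    intro s hs
    have := (hI1 s hs).union (hI2 s hs)
    rwa [Set.Ioc_union_Ioi_eq_Ioi zero_le_one] at this
  -- split bound
  have hsplit : ∀ s : ℝ, 0 < s →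
      |∫ ω in Set.Ioi (0 : ℝ), F s ω| ≤
        (∫ ω in Set.Ioc (0 : ℝ) 1, |F s ω|) + ∫ ω in Set.Ioi (1 : ℝ), |F s ω| := by
    intro s hs
    rw [← Set.Ioc_union_Ioi_eq_Ioi (zero_le_one (α := ℝ)),
      setIntegral_union (Set.Ioc_disjoint_Ioi le_rfl) measurableSet_Ioi (hI1 s hs) (hI2 s hs)]
    refine (abs_add_le _ _).trans (add_le_add ?_ ?_) <;>
      simpa [Real.norm_eq_abs] using norm_integral_le_integral_norm (μ := volume.restrict _) (F s)
  -- bound on the small piece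
  set A : ℝ := ∫ ω in Set.Ioc (0 : ℝ) 1, c₁ * ω ^ p with hAdef
  have hA0 : 0 ≤ A := by
    apply setIntegral_nonneg measurableSet_Ioc
    intro ω hω
    have : (0:ℝ) ≤ ω ^ p := Real.rpow_nonneg hω.1.le p
    positivity
  have hsmall_int : ∀ s : ℝ, 0 < s → (∫ ω in Set.Ioc (0 : ℝ) 1, |F s ω|) ≤ A := by
    intro s hs
    exact setIntegral_mono_on (hI1 s hs).abs hg₁ measurableSet_Ioc fun ω hω => hsmall s ω hs hω
  have htail_int' : ∀ s : ℝ, 0 < s → (∫ ω in Set.Ioi (1 : ℝ), |F s ω|) ≤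
      ∫ ω in Set.Ioi (1 : ℝ), c₀ * ω ^ q * Real.exp (-s * ω) := by
    intro s hs
    exact setIntegral_mono_on (hI2 s hs).abs (hg₂ s hs) measurableSet_Ioi
      fun ω hω => htail s ω hs (le_of_lt hω)
  rcases lt_or_gt_of_ne hq with hq' | hq'
  · -- q < -1 : tail integral is bounded uniformly in s
    set B : ℝ := ∫ ω in Set.Ioi (1 : ℝ), c₀ * ω ^ q with hBdef
    have hB0 : 0 ≤ B := by
      apply setIntegral_nonneg measurableSet_Ioi
      intro ω hω
      have hω0 : (0:ℝ) < ω := lt_of_lt_of_le one_pos (le_of_lt hω)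
      have : (0:ℝ) ≤ ω ^ q := Real.rpow_nonneg hω0.le q
      positivity
    refine ⟨A + B + 1, by positivity, hI, ?_⟩
    intro s hs hs1
    have hmax : max (q + 1) 0 = 0 := max_eq_right (by linarith)
    rw [hmax, neg_zero, Real.rpow_zero, mul_one]
    have htb : (∫ ω in Set.Ioi (1 : ℝ), c₀ * ω ^ q * Real.exp (-s * ω)) ≤ B := by
      have hBint : IntegrableOn (fun ω : ℝ => c₀ * ω ^ q) (Set.Ioi 1) :=
        (integrableOn_Ioi_rpow_of_lt hq' zero_lt_one).const_mul c₀
      refine setIntegral_mono_on (hg₂ s hs) hBint measurableSet_Ioi fun ω hω => ?_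
      have hω0 : (0:ℝ) < ω := lt_of_lt_of_le one_pos (le_of_lt hω)
      have he : Real.exp (-s * ω) ≤ 1 := Real.exp_le_one_iff.mpr (by nlinarith)
      have hn : (0:ℝ) ≤ c₀ * ω ^ q := by
        have : (0:ℝ) ≤ ω ^ q := Real.rpow_nonneg hω0.le q
        positivity
      calc c₀ * ω ^ q * Real.exp (-s * ω) ≤ c₀ * ω ^ q * 1 :=
            mul_le_mul_of_nonneg_left he hn
        _ = c₀ * ω ^ q := mul_one _
    calc |∫ ω in Set.Ioi (0 : ℝ), F s ω| ≤ _ := hsplit s hs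
      _ ≤ A + B := add_le_add (hsmall_int s hs) ((htail_int' s hs).trans htb)
      _ ≤ A + B + 1 := by linarith
  · -- q > -1 : tail integral is bounded by the Gamma integral
    set B : ℝ := c₀ * Real.Gamma (q + 1) with hBdef
    have hB0 : 0 ≤ B := mul_nonneg hc₀ (Real.Gamma_nonneg_of_nonneg (by linarith))
    refine ⟨A + B + 1, by positivity, hI, ?_⟩
    intro s hs hs1
    have hmax : max (q + 1) 0 = q + 1 := max_eq_left (by linarith)
    rw [hmax]
    have hone : (1 : ℝ) ≤ s ^ (-(q + 1)) :=
      Real.one_le_rpow_of_pos_of_le_one_of_nonpos hs hs1 (by linarith)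
    have hval : (∫ ω in Set.Ioi (0 : ℝ), ω ^ q * Real.exp (-s * ω)) =
        (1 / s) ^ (q + 1) * Real.Gamma (q + 1) := by
      have := Real.integral_rpow_mul_exp_neg_mul_Ioi (show 0 < q + 1 by linarith) hs
      simpa [neg_mul, add_sub_cancel_right] using this
    have htb : (∫ ω in Set.Ioi (1 : ℝ), c₀ * ω ^ q * Real.exp (-s * ω)) ≤
        B * s ^ (-(q + 1)) := by
      have h1 : (∫ ω in Set.Ioi (1 : ℝ), c₀ * ω ^ q * Real.exp (-s * ω)) ≤
          ∫ ω in Set.Ioi (0 : ℝ), c₀ * ω ^ q * Real.exp (-s * ω) := by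
        refine setIntegral_mono_set ?_ ?_
          (HasSubset.Subset.eventuallyLE (Set.Ioi_subset_Ioi zero_le_one))
        · simpa [mul_assoc, IntegrableOn] using ((base_int hq' hs).const_mul c₀)
        · filter_upwards [ae_restrict_mem measurableSet_Ioi] with ω hω
          have : (0:ℝ) ≤ ω ^ q := Real.rpow_nonneg (le_of_lt hω) q
          positivity
      have h2 : (∫ ω in Set.Ioi (0 : ℝ), c₀ * ω ^ q * Real.exp (-s * ω)) =
          B * (1 / s) ^ (q + 1) := by
        simp only [mul_assoc]
        rw [MeasureTheory.integral_const_mul, hval, hBdef]; ring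
      have h3 : (1 / s : ℝ) ^ (q + 1) = s ^ (-(q + 1)) := by
        rw [one_div, Real.inv_rpow hs.le, ← Real.rpow_neg hs.le]
      rw [h2, h3] at h1
      exact h1
    calc |∫ ω in Set.Ioi (0 : ℝ), F s ω| ≤ _ := hsplit s hs
      _ ≤ A + B * s ^ (-(q + 1)) :=
          add_le_add (hsmall_int s hs) ((htail_int' s hs).trans htb)
      _ ≤ (A + B + 1) * s ^ (-(q + 1)) := by nlinarith

/-- For α ∈ (0,1), β < 1+α and k ∈ ℕ there exists C_k > 0
(depending only on α, β, k) such that the integrals ∫₀^∞ ω^k e^{−sω} ψ_{α,β}(ω) dω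
converge absolutely for every s > 0 and, for all s ∈ (0,1]:
|∫₀^∞ ω^k e^{−sω} ψ_{α,β}(ω) dω| ≤ C_k s^{−max(k−β+1,0)} if β ≠ 1, and
|∫₀^∞ ω^k e^{−sω} ψ_{α,1}(ω) dω| ≤ C_k s^{−max(k−α,0)} if β = 1. -/
theorem psiml_laplace_deriv_bound_small_s
    (α β : ℝ) (hα : α ∈ Set.Ioo (0 : ℝ) 1) (hβ : β < 1 + α) (k : ℕ) :
    ∃ C > (0 : ℝ),
      (∀ s : ℝ, 0 < s →
        IntegrableOn (fun ω : ℝ => ω ^ k * Real.exp (-s * ω) * psiml α β ω)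
          (Set.Ioi 0)) ∧
      (∀ s : ℝ, 0 < s → s ≤ 1 →
        (β ≠ 1 →
          |∫ ω in Set.Ioi (0 : ℝ), ω ^ k * Real.exp (-s * ω) * psiml α β ω| ≤
            C * s ^ (-(max ((k : ℝ) - β + 1) 0))) ∧
        (β = 1 →
          |∫ ω in Set.Ioi (0 : ℝ), ω ^ k * Real.exp (-s * ω) * psiml α β ω| ≤
            C * s ^ (-(max ((k : ℝ) - α) 0)))) := by
  obtain ⟨hα0, hα1⟩ := hα
  set L : ℝ := Real.sin (Real.pi * α) with hLdef
  have hπ := Real.pi_pos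
  have hL : 0 < L := Real.sin_pos_of_pos_of_lt_pi (by positivity) (by nlinarith)
  -- denominator lower bounds
  have hD : ∀ ω : ℝ, 0 < ω →
      L ^ 2 ≤ ω ^ (2 * α) + 2 * ω ^ α * Real.cos (Real.pi * α) + 1 ∧
      L ^ 2 * ω ^ (2 * α) ≤ ω ^ (2 * α) + 2 * ω ^ α * Real.cos (Real.pi * α) + 1 := by
    intro ω hω
    have hu : 0 < ω ^ α := Real.rpow_pos_of_pos hω α
    have h2 : ω ^ (2 * α) = (ω ^ α) ^ 2 := by
      rw [sq, ← Real.rpow_add hω, two_mul]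
    have hsc := Real.sin_sq_add_cos_sq (Real.pi * α)
    constructor
    · rw [h2, hLdef]; nlinarith [sq_nonneg (ω ^ α + Real.cos (Real.pi * α))]
    · rw [h2, hLdef]; nlinarith [sq_nonneg (Real.cos (Real.pi * α) * ω ^ α + 1)]
  have hDpos : ∀ ω : ℝ, 0 < ω →
      0 < ω ^ (2 * α) + 2 * ω ^ α * Real.cos (Real.pi * α) + 1 :=
    fun ω hω => lt_of_lt_of_le (by positivity) (hD ω hω).1
  -- continuity
  have hFc : ∀ s : ℝ, 0 < s →
      ContinuousOn (fun ω : ℝ => ω ^ k * Real.exp (-s * ω) * psiml α β ω) (Set.Ioi 0) := by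
    intro s hs
    refine ContinuousOn.mul (ContinuousOn.mul ?_ ?_) ?_
    · exact (continuous_pow k).continuousOn
    · exact (Real.continuous_exp.comp (by fun_prop)).continuousOn
    · unfold psiml
      refine ContinuousOn.div ?_ ?_ ?_
      · exact ((crp_contOn _).mul continuousOn_const).sub
          ((crp_contOn _).mul continuousOn_const)
      · exact ((crp_contOn _).add
          ((continuousOn_const.mul (crp_contOn α)).mul continuousOn_const)).add
          continuousOn_const
      · exact fun ω hω => ne_of_gt (hDpos ω hω)
  -- numerator bound
  have hnum : ∀ ω : ℝ, 0 < ω →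
      |ω ^ (2 * α - β) * Real.sin (Real.pi * β) -
        ω ^ (α - β) * Real.sin (Real.pi * (β - α))| ≤ ω ^ (2 * α - β) + ω ^ (α - β) := by
    intro ω hω
    have h1 : |ω ^ (2 * α - β) * Real.sin (Real.pi * β)| ≤ ω ^ (2 * α - β) := by
      rw [abs_mul, abs_of_nonneg (Real.rpow_nonneg hω.le _)]
      exact mul_le_of_le_one_right (Real.rpow_nonneg hω.le _) (Real.abs_sin_le_one _)
    have h2 : |ω ^ (α - β) * Real.sin (Real.pi * (β - α))| ≤ ω ^ (α - β) := by
      rw [abs_mul, abs_of_nonneg (Real.rpow_nonneg hω.le _)]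
      exact mul_le_of_le_one_right (Real.rpow_nonneg hω.le _) (Real.abs_sin_le_one _)
    calc |ω ^ (2 * α - β) * Real.sin (Real.pi * β) -
          ω ^ (α - β) * Real.sin (Real.pi * (β - α))|
        ≤ |ω ^ (2 * α - β) * Real.sin (Real.pi * β)| +
          |ω ^ (α - β) * Real.sin (Real.pi * (β - α))| := abs_sub _ _
      _ ≤ ω ^ (2 * α - β) + ω ^ (α - β) := add_le_add h1 h2
  -- bound for small ω (valid for every β < 1 + α)
  have hψsmall : ∀ ω ∈ Set.Ioc (0 : ℝ) 1, |psiml α β ω| ≤ 2 / L ^ 2 * ω ^ (α - β) := by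
    intro ω hω
    obtain ⟨hω0, hω1⟩ := hω
    have hmono : ω ^ (2 * α - β) ≤ ω ^ (α - β) :=
      Real.rpow_le_rpow_of_exponent_ge hω0 hω1 (by linarith)
    have hnum' : |ω ^ (2 * α - β) * Real.sin (Real.pi * β) -
        ω ^ (α - β) * Real.sin (Real.pi * (β - α))| ≤ 2 * ω ^ (α - β) :=
      (hnum ω hω0).trans (by linarith)
    unfold psiml
    rw [abs_div, abs_of_pos (hDpos ω hω0)]
    have h := div_le_div₀ (by positivity) hnum' (by positivity) (hD ω hω0).1
    calc _ ≤ 2 * ω ^ (α - β) / L ^ 2 := h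
      _ = 2 / L ^ 2 * ω ^ (α - β) := by ring
  -- the integrand bound for small ω
  have hsmall : ∀ s ω : ℝ, 0 < s → ω ∈ Set.Ioc (0 : ℝ) 1 →
      |ω ^ k * Real.exp (-s * ω) * psiml α β ω| ≤ 2 / L ^ 2 * ω ^ (α - β) := by
    intro s ω hs hω
    obtain ⟨hω0, hω1⟩ := hω
    rw [abs_mul, abs_mul]
    have h1 : |ω ^ k| ≤ 1 := by
      rw [abs_of_nonneg (pow_nonneg hω0.le k)]
      exact pow_le_one₀ hω0.le hω1
    have h2 : |Real.exp (-s * ω)| ≤ 1 := by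
      rw [abs_of_pos (Real.exp_pos _)]
      exact Real.exp_le_one_iff.mpr (by nlinarith)
    have h3 := hψsmall ω ⟨hω0, hω1⟩
    have hψ0 : (0:ℝ) ≤ 2 / L ^ 2 * ω ^ (α - β) := by
      have : (0:ℝ) ≤ ω ^ (α - β) := Real.rpow_nonneg hω0.le _
      positivity
    calc |ω ^ k| * |Real.exp (-s * ω)| * |psiml α β ω|
        ≤ 1 * 1 * (2 / L ^ 2 * ω ^ (α - β)) := by
          apply mul_le_mul (mul_le_mul h1 h2 (abs_nonneg _) zero_le_one) h3 (abs_nonneg _)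
          norm_num
      _ = 2 / L ^ 2 * ω ^ (α - β) := by ring
  rcases eq_or_ne β 1 with hβ1 | hβ1
  · -- case β = 1
    subst hβ1
    -- numerator simplification
    have hnum1 : ∀ ω : ℝ, 0 < ω →
        ω ^ (2 * α - 1) * Real.sin (Real.pi * 1) -
          ω ^ (α - 1) * Real.sin (Real.pi * (1 - α)) = -(L * ω ^ (α - 1)) := by
      intro ω hω
      rw [mul_one, Real.sin_pi, show Real.pi * (1 - α) = Real.pi - Real.pi * α by ring,
        Real.sin_pi_sub]
      ring
    have hψtail : ∀ ω : ℝ, 1 ≤ ω → |psiml α 1 ω| ≤ 1 / L * ω ^ (-α - 1) := by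
      intro ω hω1
      have hω0 : (0:ℝ) < ω := lt_of_lt_of_le one_pos hω1
      unfold psiml
      rw [hnum1 ω hω0, abs_div, abs_of_pos (hDpos ω hω0), abs_neg,
        abs_of_nonneg (by positivity : (0:ℝ) ≤ L * ω ^ (α - 1))]
      have h := div_le_div₀ (by positivity : (0:ℝ) ≤ L * ω ^ (α - 1)) le_rfl
        (by positivity) (hD ω hω0).2
      refine h.trans (le_of_eq ?_)
      have hsplit : ω ^ (α - 1) = ω ^ (2 * α) * ω ^ (-α - 1) := by
        rw [← Real.rpow_add hω0]; ring_nf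
      rw [hsplit]
      have h2α : ω ^ (2 * α) ≠ 0 := ne_of_gt (Real.rpow_pos_of_pos hω0 _)
      field_simp
    have htail : ∀ s ω : ℝ, 0 < s → 1 ≤ ω →
        |ω ^ k * Real.exp (-s * ω) * psiml α 1 ω| ≤
          1 / L * ω ^ ((k : ℝ) - α - 1) * Real.exp (-s * ω) := by
      intro s ω hs hω1
      have hω0 : (0:ℝ) < ω := lt_of_lt_of_le one_pos hω1
      rw [abs_mul, abs_mul, abs_of_nonneg (pow_nonneg hω0.le k),
        abs_of_pos (Real.exp_pos _)]
      have h3 := hψtail ω hω1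
      calc ω ^ k * Real.exp (-s * ω) * |psiml α 1 ω|
          ≤ ω ^ k * Real.exp (-s * ω) * (1 / L * ω ^ (-α - 1)) := by
            apply mul_le_mul_of_nonneg_left h3 (by positivity)
        _ = 1 / L * ω ^ ((k : ℝ) - α - 1) * Real.exp (-s * ω) := by
            rw [show (k : ℝ) - α - 1 = (k : ℝ) + (-α - 1) by ring,
              Real.rpow_add hω0, Real.rpow_natCast]
            ring
    have hq : (k : ℝ) - α - 1 ≠ -1 := by
      intro h
      have hkα : (k : ℝ) = α := by linarith
      rcases Nat.eq_zero_or_pos k with hk | hk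
      · rw [hk] at hkα; simp at hkα; linarith
      · have : (1 : ℝ) ≤ (k : ℝ) := by exact_mod_cast hk
        linarith
    obtain ⟨C, hC, hint, hbd⟩ := master (c₀ := 1 / L) (c₁ := 2 / L ^ 2)
      (p := α - 1) (q := (k : ℝ) - α - 1) (by positivity) (by positivity)
      (by linarith) hq hFc hsmall htail
    refine ⟨C, hC, hint, fun s hs hs1 => ⟨fun h => absurd rfl h, fun _ => ?_⟩⟩
    have := hbd s hs hs1
    rwa [show (k : ℝ) - α - 1 + 1 = (k : ℝ) - α by ring] at this
  · -- case β ≠ 1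
    have hψtail : ∀ ω : ℝ, 1 ≤ ω → |psiml α β ω| ≤ 2 / L ^ 2 * ω ^ (-β) := by
      intro ω hω1
      have hω0 : (0:ℝ) < ω := lt_of_lt_of_le one_pos hω1
      have hmono : ω ^ (α - β) ≤ ω ^ (2 * α - β) :=
        Real.rpow_le_rpow_of_exponent_le hω1 (by linarith)
      have hnum' : |ω ^ (2 * α - β) * Real.sin (Real.pi * β) -
          ω ^ (α - β) * Real.sin (Real.pi * (β - α))| ≤ 2 * ω ^ (2 * α - β) :=
        (hnum ω hω0).trans (by linarith)
      unfold psiml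
      rw [abs_div, abs_of_pos (hDpos ω hω0)]
      have h := div_le_div₀ (by positivity) hnum' (by positivity) (hD ω hω0).2
      refine h.trans (le_of_eq ?_)
      have hsplit : ω ^ (2 * α - β) = ω ^ (2 * α) * ω ^ (-β) := by
        rw [← Real.rpow_add hω0]; ring_nf
      rw [hsplit]
      have h2α : ω ^ (2 * α) ≠ 0 := ne_of_gt (Real.rpow_pos_of_pos hω0 _)
      have hL0 : L ≠ 0 := ne_of_gt hL
      field_simp
    have htail : ∀ s ω : ℝ, 0 < s → 1 ≤ ω →
        |ω ^ k * Real.exp (-s * ω) * psiml α β ω| ≤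
          2 / L ^ 2 * ω ^ ((k : ℝ) - β) * Real.exp (-s * ω) := by
      intro s ω hs hω1
      have hω0 : (0:ℝ) < ω := lt_of_lt_of_le one_pos hω1
      rw [abs_mul, abs_mul, abs_of_nonneg (pow_nonneg hω0.le k),
        abs_of_pos (Real.exp_pos _)]
      have h3 := hψtail ω hω1
      calc ω ^ k * Real.exp (-s * ω) * |psiml α β ω|
          ≤ ω ^ k * Real.exp (-s * ω) * (2 / L ^ 2 * ω ^ (-β)) := by
            apply mul_le_mul_of_nonneg_left h3 (by positivity)
        _ = 2 / L ^ 2 * ω ^ ((k : ℝ) - β) * Real.exp (-s * ω) := by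
            rw [show (k : ℝ) - β = (k : ℝ) + (-β) by ring,
              Real.rpow_add hω0, Real.rpow_natCast]
            ring
    have hq : (k : ℝ) - β ≠ -1 := by
      intro h
      have hkβ : β = (k : ℝ) + 1 := by linarith
      rcases Nat.eq_zero_or_pos k with hk | hk
      · rw [hk] at hkβ; simp at hkβ; exact hβ1 (by rw [hkβ])
      · have : (1 : ℝ) ≤ (k : ℝ) := by exact_mod_cast hk
        linarith
    obtain ⟨C, hC, hint, hbd⟩ := master (c₀ := 2 / L ^ 2) (c₁ := 2 / L ^ 2)
      (p := α - β) (q := (k : ℝ) - β) (by positivity) (by positivity)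
      (by linarith) hq hFc hsmall htail
    refine ⟨C, hC, hint, fun s hs hs1 => ⟨fun _ => ?_, fun h => absurd h hβ1⟩⟩
    exact hbd s hs hs1
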